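/- Let k be a field and r an even natural number. Consider the k-algebra homomorphism ι : k[[x,y]]/(y² - x^{r+1}) → k[[t]] defined by x ↦ t² and y ↦ t^{r+1}. Then ι is injective, and its image is exactly the set of power series f ∈ k[[t]] such that the coefficient of t^n in f vanishes for every odd n with n < r + 1. -/

import Mathlib

open Finset MvPowerSeries

namespace Stmt6

noncomputable section

variable {k : Type*} [Field k]

def E (p : ℕ × ℕ) : Fin 2 →₀ ℕ := Finsupp.single (0 : Fin 2) p.1 + Finsupp.single 1 p.2

@[simp] lemma E_apply0 (p : ℕ × ℕ) : E p 0 = p.1 := by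
  simp [E, Finsupp.single_apply]

@[simp] lemma E_apply1 (p : ℕ × ℕ) : E p 1 = p.2 := by
  simp [E, Finsupp.single_apply]

lemma E_eta (d : Fin 2 →₀ ℕ) : E (d 0, d 1) = d := by
  ext t
  fin_cases t <;> simp

lemma E_eq_iff {p q : ℕ × ℕ} : E p = E q ↔ p = q := by
  constructor
  · intro h
    have h0 : E p 0 = E q 0 := by rw [h]
    have h1 : E p 1 = E q 1 := by rw [h]
    simp only [E_apply0, E_apply1] at h0 h1
    exact Prod.ext h0 h1
  · rintro rfl; rfl

lemma E_add (p q : ℕ × ℕ) : E (p.1 + q.1, p.2 + q.2) = E p + E q := by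
  ext t
  fin_cases t <;> simp

def T (r n : ℕ) : Finset (ℕ × ℕ) :=
  (Finset.range (n + 1) ×ˢ Finset.range (n + 1)).filter fun p => 2 * p.1 + (r + 1) * p.2 = n

lemma mem_T {r n : ℕ} {p : ℕ × ℕ} : p ∈ T r n ↔ 2 * p.1 + (r + 1) * p.2 = n := by
  simp only [T, mem_filter, mem_product, mem_range]
  constructor
  · tauto
  · intro h
    have h2 : p.2 ≤ (r + 1) * p.2 := Nat.le_mul_of_pos_left p.2 (by omega)
    exact ⟨⟨by omega, by omega⟩, h⟩

def PhiFun (r : ℕ) (f : MvPowerSeries (Fin 2) k) : PowerSeries k :=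
  PowerSeries.mk fun n => ∑ p ∈ T r n, MvPowerSeries.coeff (E p) f

lemma coeff_PhiFun (r : ℕ) (f : MvPowerSeries (Fin 2) k) (n : ℕ) :
    PowerSeries.coeff n (PhiFun r f) = ∑ p ∈ T r n, MvPowerSeries.coeff (E p) f :=
  PowerSeries.coeff_mk _ _

lemma coeff_mul_E (f g : MvPowerSeries (Fin 2) k) (s : ℕ × ℕ) :
    MvPowerSeries.coeff (E s) (f * g) =
      ∑ x ∈ Finset.HasAntidiagonal.antidiagonal s.1 ×ˢ Finset.HasAntidiagonal.antidiagonal s.2,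
        MvPowerSeries.coeff (E (x.1.1, x.2.1)) f * MvPowerSeries.coeff (E (x.1.2, x.2.2)) g := by
  classical
  rw [MvPowerSeries.coeff_mul]
  refine Finset.sum_nbij' (i := fun uv => ((uv.1 0, uv.2 0), (uv.1 1, uv.2 1)))
    (j := fun x => (E (x.1.1, x.2.1), E (x.1.2, x.2.2))) ?_ ?_ ?_ ?_ ?_
  · intro uv huv
    rw [Finset.HasAntidiagonal.mem_antidiagonal] at huv
    simp only [Finset.mem_product, Finset.HasAntidiagonal.mem_antidiagonal]
    constructor
    · have := DFunLike.congr_fun huv 0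
      simpa using this
    · have := DFunLike.congr_fun huv 1
      simpa using this
  · intro x hx
    simp only [Finset.mem_product, Finset.HasAntidiagonal.mem_antidiagonal] at hx
    rw [Finset.HasAntidiagonal.mem_antidiagonal, ← E_add]
    simp only [hx.1, hx.2]
  · intro uv _
    exact Prod.ext (E_eta _) (E_eta _)
  · intro x _
    simp
  · intro uv _
    simp [E_eta]


lemma PhiFun_mul (r : ℕ) (f g : MvPowerSeries (Fin 2) k) :
    PhiFun r (f * g) = PhiFun r f * PhiFun r g := by
  classical
  ext n
  have L : PowerSeries.coeff n (PhiFun r (f * g)) =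
      ∑ x ∈ (T r n).sigma (fun s => Finset.HasAntidiagonal.antidiagonal s.1 ×ˢ Finset.HasAntidiagonal.antidiagonal s.2),
        MvPowerSeries.coeff (E (x.2.1.1, x.2.2.1)) f *
          MvPowerSeries.coeff (E (x.2.1.2, x.2.2.2)) g := by
    rw [coeff_PhiFun, Finset.sum_sigma]
    exact Finset.sum_congr rfl fun s _ => coeff_mul_E f g s
  have R : PowerSeries.coeff n (PhiFun r f * PhiFun r g) =
      ∑ x ∈ (Finset.HasAntidiagonal.antidiagonal n).sigma (fun ij => T r ij.1 ×ˢ T r ij.2),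
        MvPowerSeries.coeff (E x.2.1) f * MvPowerSeries.coeff (E x.2.2) g := by
    rw [PowerSeries.coeff_mul, Finset.sum_sigma]
    refine Finset.sum_congr rfl fun ij _ => ?_
    rw [coeff_PhiFun, coeff_PhiFun, Finset.sum_mul_sum, Finset.sum_product]
  rw [L, R]
  refine Finset.sum_nbij'
    (i := fun x => ⟨(2 * x.2.1.1 + (r + 1) * x.2.2.1, 2 * x.2.1.2 + (r + 1) * x.2.2.2),
      ((x.2.1.1, x.2.2.1), (x.2.1.2, x.2.2.2))⟩)
    (j := fun y => ⟨(y.2.1.1 + y.2.2.1, y.2.1.2 + y.2.2.2),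
      ((y.2.1.1, y.2.2.1), (y.2.1.2, y.2.2.2))⟩) ?_ ?_ ?_ ?_ ?_
  · rintro ⟨⟨s1, s2⟩, ⟨⟨a1, a2⟩, ⟨b1, b2⟩⟩⟩ hx
    simp only [Finset.mem_sigma, Finset.mem_product, Finset.HasAntidiagonal.mem_antidiagonal, mem_T] at hx ⊢
    obtain ⟨hs, ha, hb⟩ := hx
    subst ha hb
    have hm : (r + 1) * (b1 + b2) = (r + 1) * b1 + (r + 1) * b2 := Nat.mul_add _ _ _
    refine ⟨by omega, trivial, trivial⟩
  · rintro ⟨⟨i1, i2⟩, ⟨⟨p1, p2⟩, ⟨q1, q2⟩⟩⟩ hy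
    simp only [Finset.mem_sigma, Finset.mem_product, Finset.HasAntidiagonal.mem_antidiagonal, mem_T] at hy ⊢
    obtain ⟨hs, hp, hq⟩ := hy
    subst hp hq
    have hm : (r + 1) * (p2 + q2) = (r + 1) * p2 + (r + 1) * q2 := Nat.mul_add _ _ _
    refine ⟨by omega, trivial, trivial⟩
  · rintro ⟨⟨s1, s2⟩, ⟨⟨a1, a2⟩, ⟨b1, b2⟩⟩⟩ hx
    simp only [Finset.mem_sigma, Finset.mem_product, Finset.HasAntidiagonal.mem_antidiagonal, mem_T] at hx
    obtain ⟨hs, ha, hb⟩ := hx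
    subst ha hb
    rfl
  · rintro ⟨⟨i1, i2⟩, ⟨⟨p1, p2⟩, ⟨q1, q2⟩⟩⟩ hy
    simp only [Finset.mem_sigma, Finset.mem_product, Finset.HasAntidiagonal.mem_antidiagonal, mem_T] at hy
    obtain ⟨hs, hp, hq⟩ := hy
    subst hp hq
    rfl
  · rintro ⟨⟨s1, s2⟩, ⟨⟨a1, a2⟩, ⟨b1, b2⟩⟩⟩ _
    rfl


lemma PhiFun_one (r : ℕ) : PhiFun r (1 : MvPowerSeries (Fin 2) k) = 1 := by
  classical
  ext n
  rw [coeff_PhiFun, PowerSeries.coeff_one]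
  have key : ∀ p ∈ T r n, MvPowerSeries.coeff (E p) (1 : MvPowerSeries (Fin 2) k)
      = if p = (0, 0) then (1 : k) else 0 := by
    intro p _
    rw [MvPowerSeries.coeff_one]
    refine if_congr ?_ rfl rfl
    rw [show (0 : Fin 2 →₀ ℕ) = E (0, 0) by simp [E], E_eq_iff]
  rw [Finset.sum_congr rfl key, Finset.sum_ite_eq']
  by_cases h : n = 0
  · subst h
    rw [if_pos (by rw [mem_T]; simp), if_pos rfl]
  · rw [if_neg (by rw [mem_T]; omega), if_neg h]

def Phi (r : ℕ) : MvPowerSeries (Fin 2) k →ₐ[k] PowerSeries k :=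
  AlgHom.mk'
    { toFun := PhiFun r
      map_one' := PhiFun_one r
      map_mul' := PhiFun_mul r
      map_zero' := by ext n; simp [coeff_PhiFun]
      map_add' := by intro f g; ext n; simp [coeff_PhiFun, Finset.sum_add_distrib] }
    (by
      intro c f
      ext n
      simp [coeff_PhiFun, Finset.mul_sum])

lemma Phi_apply (r : ℕ) (f : MvPowerSeries (Fin 2) k) : Phi r f = PhiFun r f := rfl

lemma Phi_ringHom_apply (r : ℕ) (f : MvPowerSeries (Fin 2) k) :
    ((Phi r : MvPowerSeries (Fin 2) k →ₐ[k] PowerSeries k) :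
      MvPowerSeries (Fin 2) k →+* PowerSeries k) f = PhiFun r f := rfl

lemma Phi_g (r : ℕ) :
    Phi r ((X 1 : MvPowerSeries (Fin 2) k) ^ 2 - X 0 ^ (r + 1)) = 0 := by
  classical
  rw [Phi_apply]
  ext n
  rw [coeff_PhiFun, map_zero]
  have key : ∀ p ∈ T r n,
      MvPowerSeries.coeff (E p) ((X 1 : MvPowerSeries (Fin 2) k) ^ 2 - X 0 ^ (r + 1)) =
        (if p = (0, 2) then (1 : k) else 0) - (if p = (r + 1, 0) then (1 : k) else 0) := by
    intro p _
    rw [map_sub, X_pow_eq, X_pow_eq, MvPowerSeries.coeff_monomial, MvPowerSeries.coeff_monomial]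
    congr 1
    · refine if_congr ?_ rfl rfl
      rw [show Finsupp.single (1 : Fin 2) 2 = E (0, 2) by simp [E], E_eq_iff]
    · refine if_congr ?_ rfl rfl
      rw [show Finsupp.single (0 : Fin 2) (r + 1) = E (r + 1, 0) by simp [E], E_eq_iff]
  rw [Finset.sum_congr rfl key, Finset.sum_sub_distrib, Finset.sum_ite_eq', Finset.sum_ite_eq']
  have h1 : ((0, 2) ∈ T r n) ↔ (((r + 1, 0) : ℕ × ℕ) ∈ T r n) := by
    rw [mem_T, mem_T]
    constructor <;> intro <;> omega
  rw [if_congr h1 rfl rfl, sub_self]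


def Qgen (r : ℕ) (f : MvPowerSeries (Fin 2) k) (i j : ℕ) : k :=
  ∑ m ∈ Finset.range (i + 1),
    if (r + 1) * m ≤ i then MvPowerSeries.coeff (E (i - (r + 1) * m, j + 2 * m)) f else 0

def qf (r : ℕ) (f : MvPowerSeries (Fin 2) k) : MvPowerSeries (Fin 2) k :=
  fun d => Qgen r f (d 0) (d 1 + 2)

def Cab (a b : ℕ → k) : MvPowerSeries (Fin 2) k :=
  fun d => if d 1 = 0 then a (d 0) else if d 1 = 1 then b (d 0) else 0

lemma Qgen_peel (r : ℕ) (f : MvPowerSeries (Fin 2) k) (i j : ℕ) :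
    Qgen r f i j = MvPowerSeries.coeff (E (i, j)) f +
      (if r + 1 ≤ i then Qgen r f (i - (r + 1)) (j + 2) else 0) := by
  rw [Qgen, Finset.sum_range_succ']
  have h0 : (if (r + 1) * 0 ≤ i then
      MvPowerSeries.coeff (E (i - (r + 1) * 0, j + 2 * 0)) f else 0) =
      MvPowerSeries.coeff (E (i, j)) f := by
    simp
  rw [h0, add_comm]
  congr 1
  split_ifs with h
  · rw [Qgen]
    have hsub : Finset.range (i - (r + 1) + 1) ⊆ Finset.range i := by
      intro m hm
      simp only [Finset.mem_range] at hm ⊢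
      omega
    rw [← Finset.sum_subset hsub]
    · refine Finset.sum_congr rfl fun m _ => ?_
      have hmulsucc : (r + 1) * (m + 1) = (r + 1) * m + (r + 1) := by ring
      have hc : ((r + 1) * m ≤ i - (r + 1)) ↔ ((r + 1) * (m + 1) ≤ i) := by omega
      by_cases hm : (r + 1) * m ≤ i - (r + 1)
      · rw [if_pos hm, if_pos (hc.mp hm)]
        have hpair : (i - (r + 1) * (m + 1), j + 2 * (m + 1))
            = (i - (r + 1) - (r + 1) * m, j + 2 + 2 * m) :=
          Prod.ext (by omega) (by omega)
        rw [hpair]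
      · rw [if_neg hm, if_neg (fun hcon => hm (hc.mpr hcon))]
    · intro m _ hm
      simp only [Finset.mem_range] at hm
      have h1 : m ≤ (r + 1) * m := Nat.le_mul_of_pos_left m (by omega)
      have hmulsucc : (r + 1) * (m + 1) = (r + 1) * m + (r + 1) := by ring
      rw [if_neg (by omega)]
  · refine Finset.sum_eq_zero fun m _ => ?_
    rw [if_neg]
    have : r + 1 ≤ (r + 1) * (m + 1) := Nat.le_mul_of_pos_right (r + 1) (by omega)
    omega

lemma E_sub_single1 (i j c : ℕ) : E (i, j) - Finsupp.single 1 c = E (i, j - c) := by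
  ext t
  fin_cases t <;> simp [Finsupp.tsub_apply, Finsupp.single_apply]

lemma E_sub_single0 (i j c : ℕ) : E (i, j) - Finsupp.single 0 c = E (i - c, j) := by
  ext t
  fin_cases t <;> simp [Finsupp.tsub_apply, Finsupp.single_apply]

lemma decomp (r : ℕ) (f : MvPowerSeries (Fin 2) k) :
    f = qf r f * ((X 1 : MvPowerSeries (Fin 2) k) ^ 2 - X 0 ^ (r + 1)) +
      Cab (fun n => Qgen r f n 0) (fun n => Qgen r f n 1) := by
  apply MvPowerSeries.ext
  intro d
  obtain ⟨i, j, rfl⟩ : ∃ i j, d = E (i, j) := ⟨d 0, d 1, (E_eta d).symm⟩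
  rw [map_add, mul_sub, map_sub, X_pow_eq, X_pow_eq, coeff_mul_monomial, coeff_mul_monomial]
  have hC : MvPowerSeries.coeff (E (i, j)) (Cab (fun n => Qgen r f n 0) (fun n => Qgen r f n 1))
      = if j = 0 then Qgen r f i 0 else if j = 1 then Qgen r f i 1 else 0 := by
    rw [MvPowerSeries.coeff_apply]
    simp [Cab]
  rw [hC]
  simp only [mul_one, Finsupp.single_le_iff, E_apply0, E_apply1, E_sub_single0, E_sub_single1]
  rcases j with _ | _ | J
  · rw [if_neg (show ¬(2 ≤ 0) by omega), if_pos (show (0:ℕ) = 0 from rfl)]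
    rw [Qgen_peel r f i 0]
    by_cases h : r + 1 ≤ i
    · rw [if_pos h, if_pos h]
      have h2 : MvPowerSeries.coeff (E (i - (r + 1), 0)) (qf r f)
          = Qgen r f (i - (r + 1)) (0 + 2) := by
        rw [MvPowerSeries.coeff_apply]
        simp [qf]
      rw [h2]
      ring
    · rw [if_neg h, if_neg h]
      ring
  · rw [if_neg (show ¬(2 ≤ 0 + 1) by omega), if_neg (show ¬(0 + 1 = 0) by omega),
      if_pos (show 0 + 1 = 1 from rfl)]
    rw [Qgen_peel r f i (0 + 1)]
    by_cases h : r + 1 ≤ i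
    · rw [if_pos h, if_pos h]
      have h2 : MvPowerSeries.coeff (E (i - (r + 1), 0 + 1)) (qf r f)
          = Qgen r f (i - (r + 1)) (0 + 1 + 2) := by
        rw [MvPowerSeries.coeff_apply]
        simp [qf]
      rw [h2]
      ring
    · rw [if_neg h, if_neg h]
      ring
  · rw [if_pos (show 2 ≤ J + 1 + 1 by omega), if_neg (show ¬(J + 1 + 1 = 0) by omega),
      if_neg (show ¬(J + 1 + 1 = 1) by omega)]
    have h1 : MvPowerSeries.coeff (E (i, J + 1 + 1 - 2)) (qf r f) = Qgen r f i (J + 1 + 1) := by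
      rw [MvPowerSeries.coeff_apply]
      simp only [qf, E_apply0, E_apply1]
      norm_num
    rw [h1, Qgen_peel r f i (J + 1 + 1)]
    by_cases h : r + 1 ≤ i
    · rw [if_pos h, if_pos h]
      have h2 : MvPowerSeries.coeff (E (i - (r + 1), J + 1 + 1)) (qf r f)
          = Qgen r f (i - (r + 1)) (J + 1 + 1 + 2) := by
        rw [MvPowerSeries.coeff_apply]
        simp [qf]
      rw [h2]
      ring
    · rw [if_neg h, if_neg h]
      ring


lemma coeff_Phi_Cab (r : ℕ) (hr : r % 2 = 0) (a b : ℕ → k) (n : ℕ) :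
    PowerSeries.coeff n (PhiFun r (Cab a b)) =
      if n % 2 = 0 then a (n / 2)
      else if r + 1 ≤ n then b ((n - (r + 1)) / 2) else 0 := by
  classical
  rw [coeff_PhiFun]
  have hcoeff : ∀ p : ℕ × ℕ, MvPowerSeries.coeff (E p) (Cab a b) =
      if p.2 = 0 then a p.1 else if p.2 = 1 then b p.1 else 0 := by
    intro p
    rw [MvPowerSeries.coeff_apply]
    simp [Cab]
  by_cases hpar : n % 2 = 0
  · rw [if_pos hpar]
    have key : ∀ p ∈ T r n, MvPowerSeries.coeff (E p) (Cab a b) =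
        if p = (n / 2, 0) then a (n / 2) else 0 := by
      rintro ⟨x, y⟩ hp
      rw [mem_T] at hp
      rw [hcoeff]
      dsimp only at hp ⊢
      rcases y with _ | _ | y
      · simp only [Nat.mul_zero, Nat.add_zero] at hp
        have hx : x = n / 2 := by omega
        subst hx
        norm_num
      · exfalso
        have hmm : (r + 1) * (0 + 1) = r + 1 := by ring
        omega
      · simp only [if_neg (show ¬(y + 1 + 1 = 0) by omega),
          if_neg (show ¬(y + 1 + 1 = 1) by omega),
          if_neg (show ¬((x, y + 1 + 1) = ((n / 2 : ℕ), (0 : ℕ))) by simp)]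
    rw [Finset.sum_congr rfl key, Finset.sum_ite_eq']
    rw [if_pos]
    rw [mem_T]
    simp only [Nat.mul_zero, Nat.add_zero]
    omega
  · rw [if_neg hpar]
    have key : ∀ p ∈ T r n, MvPowerSeries.coeff (E p) (Cab a b) =
        if p = ((n - (r + 1)) / 2, 1) then b ((n - (r + 1)) / 2) else 0 := by
      rintro ⟨x, y⟩ hp
      rw [mem_T] at hp
      rw [hcoeff]
      dsimp only at hp ⊢
      rcases y with _ | _ | y
      · exfalso
        simp only [Nat.mul_zero, Nat.add_zero] at hp
        omega
      · have hmm : (r + 1) * (0 + 1) = r + 1 := by ring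
        have hx : x = (n - (r + 1)) / 2 := by omega
        subst hx
        norm_num
      · simp only [if_neg (show ¬(y + 1 + 1 = 0) by omega),
          if_neg (show ¬(y + 1 + 1 = 1) by omega),
          if_neg (show ¬((x, y + 1 + 1) = (((n - (r + 1)) / 2 : ℕ), (1 : ℕ))) by simp)]
    rw [Finset.sum_congr rfl key, Finset.sum_ite_eq']
    by_cases hrn : r + 1 ≤ n
    · rw [if_pos hrn, if_pos]
      rw [mem_T]
      simp only [Nat.mul_one]
      omega
    · rw [if_neg hrn, if_neg]
      rw [mem_T]
      simp only [Nat.mul_one]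
      omega


end

end Stmt6

open Stmt6

theorem stmt_6 {k : Type*} [Field k] (r : ℕ) (hr : Even r)
    (I : Ideal (MvPowerSeries (Fin 2) k))
    (hI : I = Ideal.span {(MvPowerSeries.X 1 : MvPowerSeries (Fin 2) k) ^ 2 -
      (MvPowerSeries.X 0 : MvPowerSeries (Fin 2) k) ^ (r + 1)}) :
    ∃ ι : (MvPowerSeries (Fin 2) k ⧸ I) →ₐ[k] PowerSeries k,
      (∀ (f : MvPowerSeries (Fin 2) k) (n : ℕ),
        PowerSeries.coeff n (ι (Ideal.Quotient.mk I f)) =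
          ∑ p ∈ (Finset.range (n + 1) ×ˢ Finset.range (n + 1)).filter
              (fun p => 2 * p.1 + (r + 1) * p.2 = n),
            MvPowerSeries.coeff
              (Finsupp.single (0 : Fin 2) p.1 + Finsupp.single 1 p.2) f) ∧
      Function.Injective ι ∧
      Set.range ι = {f : PowerSeries k |
        ∀ n : ℕ, Odd n → n < r + 1 → PowerSeries.coeff n f = 0} := by
  classical
  have hr' : r % 2 = 0 := Nat.even_iff.mp hr
  set g : MvPowerSeries (Fin 2) k :=
    (MvPowerSeries.X 1 : MvPowerSeries (Fin 2) k) ^ 2 - MvPowerSeries.X 0 ^ (r + 1) with hg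
  have hker : ∀ a ∈ I, Phi (k := k) r a = 0 := by
    intro a ha
    rw [hI, Ideal.mem_span_singleton] at ha
    obtain ⟨c, rfl⟩ := ha
    rw [map_mul, Phi_g, zero_mul]
  refine ⟨Ideal.Quotient.liftₐ I (Phi r) hker, ?_, ?_, ?_⟩
  · intro f n
    erw [Ideal.Quotient.liftₐ_apply, Ideal.Quotient.lift_mk]
    exact coeff_PhiFun r f n
  · rw [injective_iff_map_eq_zero]
    intro a ha
    obtain ⟨f, rfl⟩ := Ideal.Quotient.mk_surjective a
    erw [Ideal.Quotient.liftₐ_apply, Ideal.Quotient.lift_mk] at ha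
    rw [Ideal.Quotient.eq_zero_iff_mem, hI, Ideal.mem_span_singleton]
    have hd := decomp r f
    have hC : PhiFun r (Cab (fun n => Qgen r f n 0) (fun n => Qgen r f n 1)) = 0 := by
      have h1 : Phi (k := k) r f =
          Phi r (qf r f * g) + Phi r (Cab (fun n => Qgen r f n 0) (fun n => Qgen r f n 1)) := by
        rw [← map_add, ← hd]
      rw [map_mul, Phi_g, mul_zero, zero_add] at h1
      rw [← Phi_apply, ← h1]
      exact ha
    have hA : ∀ m, Qgen r f m 0 = 0 := by
      intro m
      have := congrArg (PowerSeries.coeff (2 * m)) hC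
      rw [coeff_Phi_Cab r hr', map_zero, if_pos (by omega)] at this
      rw [show 2 * m / 2 = m by omega] at this
      exact this
    have hB : ∀ m, Qgen r f m 1 = 0 := by
      intro m
      have := congrArg (PowerSeries.coeff (r + 1 + 2 * m)) hC
      rw [coeff_Phi_Cab r hr', map_zero, if_neg (by omega), if_pos (by omega)] at this
      rw [show (r + 1 + 2 * m - (r + 1)) / 2 = m by omega] at this
      exact this
    have hzero : Cab (fun n => Qgen r f n 0) (fun n => Qgen r f n 1) = (0 : MvPowerSeries (Fin 2) k) := by
      funext d
      show (if d 1 = 0 then Qgen r f (d 0) 0 else if d 1 = 1 then Qgen r f (d 0) 1 else 0) = 0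
      split_ifs
      · exact hA _
      · exact hB _
      · rfl
    refine ⟨qf r f, ?_⟩
    conv_lhs => rw [hd]
    rw [hzero, add_zero]
    exact mul_comm _ _
  · ext h
    simp only [Set.mem_range, Set.mem_setOf_eq]
    constructor
    · rintro ⟨a, rfl⟩ n hodd hlt
      obtain ⟨f, rfl⟩ := Ideal.Quotient.mk_surjective a
      erw [Ideal.Quotient.liftₐ_apply, Ideal.Quotient.lift_mk, Phi_ringHom_apply]
      have hd := decomp r f
      have key : PhiFun r f =
          PhiFun r (Cab (fun n => Qgen r f n 0) (fun n => Qgen r f n 1)) := by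
        have h2 := congrArg (⇑(Phi (k := k) r)) hd
        rw [map_add, map_mul, Phi_g, mul_zero, zero_add] at h2
        exact h2
      rw [key, coeff_Phi_Cab r hr']
      have hn2 : n % 2 = 1 := Nat.odd_iff.mp hodd
      rw [if_neg (by omega), if_neg (by omega)]
    · intro hmem
      refine ⟨Ideal.Quotient.mk I (Cab (fun m => PowerSeries.coeff (2 * m) h)
        (fun m => PowerSeries.coeff (r + 1 + 2 * m) h)), ?_⟩
      erw [Ideal.Quotient.liftₐ_apply, Ideal.Quotient.lift_mk]
      ext n
      rw [Phi_ringHom_apply, coeff_Phi_Cab r hr']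
      split_ifs with h1 h2
      · rw [show 2 * (n / 2) = n by omega]
      · rw [show r + 1 + 2 * ((n - (r + 1)) / 2) = n by omega]
      · exact (hmem n (Nat.odd_iff.mpr (by omega)) (by omega)).symm
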